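/- arXiv:1802.00605 — 4 statements merged into one kernel-verified Lean document; each statement's English description precedes it below -/
import Mathlib

section
/- With Φ_m as in the three-term recurrence and Φ_{m;c} := Φ_m + c·Φ_{m−1}, for n ≥ 2 and constants s, t with t ≠ 0: Res(Φ_{n;s}, Φ_{n−1;t}) = (−1)^{n(n+1)/2} a_n^n c_n^{−n} ∏_{k=1}^n a_k^{2n−2k−1} c_k^{k−1} · t^n · Φ_{n;s}(−(c_n + b_n t + s t)/(a_n t)). -/
open Polynomial

/-- The resultant: `Res f g = lc(f)^(deg g) * ∏_{α root of f} g(α)`. -/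
noncomputable def Res (f g : Polynomial ℂ) : ℂ :=
  f.leadingCoeff ^ g.natDegree * (f.roots.map (fun a => g.eval a)).prod

open Finset

lemma card_roots_eq (f : Polynomial ℂ) (hf : f ≠ 0) : f.roots.card = f.natDegree :=
  (splits_iff_card_roots).mp (IsAlgClosed.splits f)

lemma eval_eq_prod (f : Polynomial ℂ) (hf : f ≠ 0) (x : ℂ) :
    f.eval x = f.leadingCoeff * (f.roots.map (fun r => x - r)).prod := by
  conv_lhs => rw [← C_leadingCoeff_mul_prod_multiset_X_sub_C (card_roots_eq f hf)]
  rw [eval_mul, eval_C, eval_multiset_prod, Multiset.map_map]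
  simp

lemma double_prod_swap (m m' : Multiset ℂ) (h : ℂ → ℂ → ℂ) :
    (m.map (fun x => (m'.map (h x)).prod)).prod
      = (m'.map (fun y => (m.map (fun x => h x y)).prod)).prod := by
  induction m using Multiset.induction with
  | empty => simp
  | cons x m ih =>
      simp only [Multiset.map_cons, Multiset.prod_cons, ih, ← Multiset.prod_map_mul]

lemma prod_map_const_mul (m : Multiset ℂ) (c : ℂ) (h : ℂ → ℂ) :
    (m.map (fun x => c * h x)).prod = c ^ m.card * (m.map h).prod := by
  rw [Multiset.prod_map_mul (f := fun _ => c) (g := h)]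
  simp

lemma res_swap (f g : Polynomial ℂ) (hf : f ≠ 0) (hg : g ≠ 0) :
    f.leadingCoeff ^ g.natDegree * (f.roots.map (fun x => g.eval x)).prod =
    (-1) ^ (f.natDegree * g.natDegree) *
      (g.leadingCoeff ^ f.natDegree * (g.roots.map (fun x => f.eval x)).prod) := by
  have cf := card_roots_eq f hf
  have cg := card_roots_eq g hg
  have h1 : (f.roots.map (fun x => g.eval x)).prod
      = g.leadingCoeff ^ f.natDegree *
        (f.roots.map (fun x => ((g.roots.map (fun y => x - y)).prod))).prod := by
    rw [Multiset.map_congr rfl (fun x _ => eval_eq_prod g hg x), prod_map_const_mul, cf]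
  have h2 : (g.roots.map (fun y => f.eval y)).prod
      = f.leadingCoeff ^ g.natDegree *
        (g.roots.map (fun y => ((f.roots.map (fun x => y - x)).prod))).prod := by
    rw [Multiset.map_congr rfl (fun x _ => eval_eq_prod f hf x), prod_map_const_mul, cg]
  have h3 : (g.roots.map (fun y => ((f.roots.map (fun x => y - x)).prod))).prod
      = (-1) ^ (f.natDegree * g.natDegree) *
        (f.roots.map (fun x => ((g.roots.map (fun y => x - y)).prod))).prod := by
    rw [double_prod_swap]
    have : ∀ x ∈ f.roots, ((g.roots.map (fun y => y - x)).prod)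
        = (-1) ^ g.natDegree * ((g.roots.map (fun y => x - y)).prod) := by
      intro x _
      rw [← cg, ← prod_map_const_mul]
      congr 1
      apply Multiset.map_congr rfl
      intro y _
      ring
    rw [Multiset.map_congr rfl this, prod_map_const_mul, cf, ← pow_mul, mul_comm g.natDegree]
  have hsq : ((-1 : ℂ) ^ (g.natDegree * f.natDegree * 2)) = 1 := by
    rcases Nat.even_or_odd (g.natDegree * f.natDegree) with h | h
    · simp [pow_mul, h.neg_one_pow]
    · simp [pow_mul, h.neg_one_pow]
  rw [h1, h2, h3]
  linear_combination (-(f.leadingCoeff ^ g.natDegree * g.leadingCoeff ^ f.natDegree *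
    (Multiset.map (fun x => (Multiset.map (fun y => x - y) g.roots).prod) f.roots).prod)) * hsq

lemma phi_deg_lc (a b c : ℕ → ℂ) (Φ : ℕ → Polynomial ℂ)
    (habc : ∀ k, 1 ≤ k → a k ≠ 0 ∧ c k ≠ 0)
    (h0 : Φ 0 = 1) (h1 : Φ 1 = C (a 1) * X + C (b 1))
    (hrec : ∀ m, 2 ≤ m →
      Φ m = (C (a m) * X + C (b m)) * Φ (m - 1) - C (c m) * Φ (m - 2)) :
    ∀ m, (Φ m).natDegree = m ∧ (Φ m).leadingCoeff = ∏ k ∈ Icc 1 m, a k := by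
  intro m
  induction m using Nat.strong_induction_on with
  | _ m ih =>
    match m with
    | 0 => simp [h0]
    | 1 =>
      constructor
      · rw [h1, natDegree_linear (habc 1 le_rfl).1]
      · rw [h1, leadingCoeff_linear (habc 1 le_rfl).1]; simp
    | (m+2) =>
      obtain ⟨d1, l1⟩ := ih (m+1) (by omega)
      obtain ⟨d0, l0⟩ := ih m (by omega)
      have ha : a (m+2) ≠ 0 := (habc (m+2) (by omega)).1
      have hΦ1 : Φ (m+1) ≠ 0 := by
        intro h
        have := l1
        rw [h, leadingCoeff_zero] at this
        exact (prod_ne_zero_iff.2 (fun k hk => (habc k (mem_Icc.mp hk).1).1)) this.symm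
      have hlin : (C (a (m+2)) * X + C (b (m+2))) ≠ 0 := by
        intro h
        have := natDegree_linear (a := a (m+2)) (b := b (m+2)) ha
        rw [h] at this; simp at this
      have hp : ((C (a (m+2)) * X + C (b (m+2))) * Φ (m+1)).natDegree = m + 2 := by
        rw [natDegree_mul hlin hΦ1, natDegree_linear ha, d1]; omega
      have hq : (C (c (m+2)) * Φ m).natDegree < m + 2 := by
        calc (C (c (m+2)) * Φ m).natDegree ≤ (C (c (m+2))).natDegree + (Φ m).natDegree :=
              natDegree_mul_le
          _ < m + 2 := by rw [natDegree_C, d0]; omega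
      have hq' : (C (c (m+2)) * Φ m).degree < ((C (a (m+2)) * X + C (b (m+2))) * Φ (m+1)).degree := by
        apply degree_lt_degree; rw [hp]; omega
      have hrw := hrec (m+2) (by omega)
      simp only [show m + 2 - 1 = m + 1 from rfl, show m + 2 - 2 = m from rfl] at hrw
      constructor
      · rw [hrw, natDegree_sub_eq_left_of_natDegree_lt (by rw [hp]; omega), hp]
      · rw [hrw, leadingCoeff_sub_of_degree_lt hq', leadingCoeff_mul,
          leadingCoeff_linear ha, l1,
          prod_Icc_succ_top (show 1 ≤ m + 1 + 1 by omega),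
          prod_Icc_succ_top (show 1 ≤ m + 1 by omega)]
        ring

lemma lemC (a b c : ℕ → ℂ) (Φ : ℕ → Polynomial ℂ)
    (habc : ∀ k, 1 ≤ k → a k ≠ 0 ∧ c k ≠ 0)
    (h0 : Φ 0 = 1) (h1 : Φ 1 = C (a 1) * X + C (b 1))
    (hrec : ∀ m, 2 ≤ m →
      Φ m = (C (a m) * X + C (b m)) * Φ (m - 1) - C (c m) * Φ (m - 2)) :
    ∀ m, 1 ≤ m → (∏ k ∈ Icc 1 m, a k) ^ (m - 1) *
      ((Φ m).roots.map (fun x => (Φ (m-1)).eval x)).prod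
      = (-1) ^ (m * (m - 1) / 2) * ∏ k ∈ Icc 1 m, a k ^ (2 * (m - k)) * c k ^ (k - 1) := by
  have hdl := phi_deg_lc a b c Φ habc h0 h1 hrec
  have hAne : ∀ j, (∏ k ∈ Icc 1 j, a k) ≠ 0 := fun j =>
    prod_ne_zero_iff.2 (fun k hk => (habc k (mem_Icc.mp hk).1).1)
  have hΦne : ∀ j, Φ j ≠ 0 := by
    intro j h
    have := (hdl j).2
    rw [h, leadingCoeff_zero] at this
    exact hAne j this.symm
  intro m hm
  induction m, hm using Nat.le_induction with
  | base =>
    simp only [Nat.sub_self, pow_zero, one_mul, h0]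
    simp
  | succ m hm ih =>
    have d1 : (Φ (m+1)).natDegree = m + 1 := (hdl (m+1)).1
    have dm : (Φ m).natDegree = m := (hdl m).1
    have l1 : (Φ (m+1)).leadingCoeff = ∏ k ∈ Icc 1 (m+1), a k := (hdl (m+1)).2
    have lm : (Φ m).leadingCoeff = ∏ k ∈ Icc 1 m, a k := (hdl m).2
    have hcard : (Φ m).roots.card = m := by rw [card_roots_eq _ (hΦne m), dm]
    -- eval of Φ (m+1) at roots of Φ m
    have hev : ∀ x ∈ (Φ m).roots, (Φ (m+1)).eval x = -(c (m+1)) * (Φ (m-1)).eval x := by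
      intro x hx
      have hx0 : (Φ m).eval x = 0 := isRoot_of_mem_roots hx
      have := hrec (m+1) (by omega)
      simp only [Nat.add_sub_cancel, show m + 1 - 2 = m - 1 by omega] at this
      rw [this]
      simp [hx0]
    have hswap := res_swap (Φ (m+1)) (Φ m) (hΦne (m+1)) (hΦne m)
    rw [dm, d1, l1, lm] at hswap
    have heven : (-1 : ℂ) ^ ((m+1) * m) = 1 := by
      rw [mul_comm]; exact (Nat.even_mul_succ_self m).neg_one_pow
    rw [heven, one_mul] at hswap
    have hprod : ((Φ m).roots.map (fun x => (Φ (m+1)).eval x)).prod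
        = (-(c (m+1))) ^ m * ((Φ m).roots.map (fun x => (Φ (m-1)).eval x)).prod := by
      rw [Multiset.map_congr rfl hev, prod_map_const_mul, hcard]
    rw [hprod] at hswap
    -- now combine
    have hpowsplit : (∏ k ∈ Icc 1 m, a k) ^ (m + 1)
        = (∏ k ∈ Icc 1 m, a k) ^ 2 * (∏ k ∈ Icc 1 m, a k) ^ (m - 1) := by
      rw [← pow_add]; congr 1; omega
    rw [hpowsplit, mul_assoc] at hswap
    have hswap2 : (∏ k ∈ Icc 1 (m+1), a k) ^ m *
        ((Φ (m+1)).roots.map (fun x => (Φ m).eval x)).prod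
        = (∏ k ∈ Icc 1 m, a k) ^ 2 * ((-(c (m+1))) ^ m *
            ((-1) ^ (m * (m - 1) / 2) * ∏ k ∈ Icc 1 m, a k ^ (2 * (m - k)) * c k ^ (k - 1))) := by
      rw [hswap, ← ih]; ring
    have hQ : (∏ k ∈ Icc 1 (m+1), a k ^ (2 * (m + 1 - k)) * c k ^ (k - 1))
        = (∏ k ∈ Icc 1 m, a k ^ (2 * (m - k)) * c k ^ (k - 1)) *
          (∏ k ∈ Icc 1 m, a k) ^ 2 * c (m+1) ^ m := by
      rw [prod_Icc_succ_top (show 1 ≤ m + 1 by omega)]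
      simp only [Nat.sub_self, mul_zero, pow_zero, one_mul, Nat.add_sub_cancel]
      congr 1
      rw [← prod_pow, ← prod_mul_distrib]
      apply prod_congr rfl
      intro k hk
      have hk' := mem_Icc.mp hk
      have : 2 * (m + 1 - k) = 2 * (m - k) + 2 := by omega
      rw [this, pow_add]
      ring
    have hsign : ((-1 : ℂ)) ^ ((m+1) * m / 2)
        = (-1 : ℂ) ^ m * (-1 : ℂ) ^ (m * (m - 1) / 2) := by
      rw [← pow_add]
      congr 1
      obtain ⟨j, rfl⟩ : ∃ j, m = j + 1 := ⟨m - 1, by omega⟩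
      obtain ⟨i, hi⟩ := Nat.even_mul_succ_self j
      have h2 : (j + 1 + 1) * (j + 1) = j * (j + 1) + 2 * (j + 1) := by ring
      have h3 : (j + 1) * (j + 1 - 1) = j * (j + 1) := by
        simp only [Nat.add_sub_cancel]; ring
      rw [h2, h3, hi]
      omega
    simp only [Nat.add_sub_cancel]
    rw [hswap2, hQ, hsign,
      show (-(c (m+1)))^m = (-1 : ℂ)^m * (c (m+1))^m by rw [← neg_one_mul, mul_pow]]
    ring

lemma shifted_deg_lc (a b c : ℕ → ℂ) (Φ : ℕ → Polynomial ℂ)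
    (habc : ∀ k, 1 ≤ k → a k ≠ 0 ∧ c k ≠ 0)
    (h0 : Φ 0 = 1) (h1 : Φ 1 = C (a 1) * X + C (b 1))
    (hrec : ∀ m, 2 ≤ m →
      Φ m = (C (a m) * X + C (b m)) * Φ (m - 1) - C (c m) * Φ (m - 2))
    (j : ℕ) (hj : 1 ≤ j) (w : ℂ) :
    (Φ j + C w * Φ (j-1)).natDegree = j ∧
      (Φ j + C w * Φ (j-1)).leadingCoeff = ∏ k ∈ Icc 1 j, a k := by
  have hdl := phi_deg_lc a b c Φ habc h0 h1 hrec
  have hlt : (C w * Φ (j-1)).natDegree < (Φ j).natDegree := by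
    calc (C w * Φ (j-1)).natDegree ≤ (C w).natDegree + (Φ (j-1)).natDegree := natDegree_mul_le
      _ < (Φ j).natDegree := by rw [natDegree_C, (hdl (j-1)).1, (hdl j).1]; omega
  refine ⟨?_, ?_⟩
  · rw [natDegree_add_eq_left_of_natDegree_lt hlt, (hdl j).1]
  · rw [leadingCoeff_add_of_degree_lt' (degree_lt_degree hlt), (hdl j).2]


theorem stmt_7 (a b c : ℕ → ℂ) (Φ : ℕ → Polynomial ℂ)
    (habc : ∀ k, 1 ≤ k → a k ≠ 0 ∧ c k ≠ 0)
    (h0 : Φ 0 = 1) (h1 : Φ 1 = C (a 1) * X + C (b 1))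
    (hrec : ∀ m, 2 ≤ m →
      Φ m = (C (a m) * X + C (b m)) * Φ (m - 1) - C (c m) * Φ (m - 2))
    (n : ℕ) (hn : 2 ≤ n) (s t : ℂ) (ht : t ≠ 0) :
    Res (Φ n + C s * Φ (n - 1)) (Φ (n - 1) + C t * Φ (n - 2)) =
      (-1) ^ (n * (n + 1) / 2) * a n ^ n * (c n)⁻¹ ^ n *
        (∏ k ∈ Finset.Icc 1 n, a k ^ ((2 * n : ℤ) - 2 * k - 1) * c k ^ (k - 1)) *
        t ^ n *
        (Φ n + C s * Φ (n - 1)).eval (-(c n + b n * t + s * t) / (a n * t)) := by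
  have hdl := phi_deg_lc a b c Φ habc h0 h1 hrec
  have hAne : ∀ j, (∏ k ∈ Icc 1 j, a k) ≠ 0 := fun j =>
    prod_ne_zero_iff.2 (fun k hk => (habc k (mem_Icc.mp hk).1).1)
  have hΦne : ∀ j, Φ j ≠ 0 := by
    intro j h
    have := (hdl j).2
    rw [h, leadingCoeff_zero] at this
    exact hAne j this.symm
  obtain ⟨m, rfl⟩ : ∃ m, n = m + 2 := ⟨n - 2, by omega⟩
  have e1 : m + 2 - 1 = m + 1 := rfl
  have e2 : m + 2 - 2 = m := rfl
  simp only [e1, e2]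
  have han : a (m+2) ≠ 0 := (habc (m+2) (by omega)).1
  have hcn : c (m+2) ≠ 0 := (habc (m+2) (by omega)).2
  set F : Polynomial ℂ := Φ (m+2) + C s * Φ (m+1) with hFdef
  set Ψ : Polynomial ℂ := Φ (m+1) + C t * Φ m with hΨdef
  set A : ℂ := ∏ k ∈ Icc 1 (m+1), a k with hAdef
  set an : ℂ := a (m+2) with handef
  set cn : ℂ := c (m+2) with hcndef
  set r : ℂ := -(cn + b (m+2) * t + s * t) / (an * t) with hrdef
  have hA : A ≠ 0 := hAdef ▸ hAne (m+1)
  obtain ⟨dF0, lF0⟩ := shifted_deg_lc a b c Φ habc h0 h1 hrec (m+2) (by omega) s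
  obtain ⟨dΨ0, lΨ0⟩ := shifted_deg_lc a b c Φ habc h0 h1 hrec (m+1) (by omega) t
  simp only [e1, Nat.add_sub_cancel] at dF0 lF0 dΨ0 lΨ0
  have hIcc : (∏ k ∈ Icc 1 (m+2), a k) = A * an := by
    rw [hAdef, handef, prod_Icc_succ_top (show 1 ≤ m + 2 by omega)]
  have dF : F.natDegree = m + 2 := by rw [hFdef]; exact dF0
  have lF : F.leadingCoeff = A * an := by rw [hFdef, lF0, hIcc]
  have dΨ : Ψ.natDegree = m + 1 := by rw [hΨdef]; exact dΨ0
  have hFne : F ≠ 0 := by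
    intro h; rw [h, leadingCoeff_zero] at lF
    exact (mul_ne_zero hA han) lF.symm
  have hΦn1ne := hΦne (m+1)
  have cardF : F.roots.card = m + 2 := by rw [card_roots_eq F hFne, dF]
  have cardΦ : (Φ (m+1)).roots.card = m + 1 := by
    rw [card_roots_eq _ hΦn1ne, (hdl (m+1)).1]
  set L : Polynomial ℂ := C (an * t) * X + C (b (m+2) * t + s * t + cn) with hLdef
  have hr2 := hrec (m+2) (by omega)
  simp only [e1, e2] at hr2
  have hI : C cn * Ψ = L * Φ (m+1) - C t * F := by
    rw [hΨdef, hFdef, hLdef, hcndef, handef, hr2]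
    simp only [C_add, C_mul]
    ring
  have hΨev : ∀ x ∈ F.roots, cn * Ψ.eval x = L.eval x * (Φ (m+1)).eval x := by
    intro x hx
    have hx0 : F.eval x = 0 := isRoot_of_mem_roots hx
    have := congrArg (eval x) hI
    simpa [hx0] using this
  have key1 : cn ^ (m+2) * (F.roots.map (fun x => Ψ.eval x)).prod
      = (F.roots.map (fun x => L.eval x)).prod *
        (F.roots.map (fun x => (Φ (m+1)).eval x)).prod := by
    rw [← Multiset.prod_map_mul, ← cardF, ← prod_map_const_mul]
    exact congrArg Multiset.prod (Multiset.map_congr rfl hΨev)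
  have hLev : ∀ x ∈ F.roots, L.eval x = -(an * t) * (r - x) := by
    intro x _
    rw [hLdef, hrdef]
    simp only [eval_add, eval_mul, eval_C, eval_X]
    field_simp
    ring
  have key2 : (F.roots.map (fun x => L.eval x)).prod
      = (-(an * t)) ^ (m+2) * (F.roots.map (fun x => r - x)).prod := by
    rw [Multiset.map_congr rfl hLev, prod_map_const_mul, cardF]
  have key5 : F.eval r = (A * an) * (F.roots.map (fun x => r - x)).prod := by
    rw [eval_eq_prod F hFne, lF]
  have hswap := res_swap F (Φ (m+1)) hFne hΦn1ne
  rw [dF, (hdl (m+1)).1, (hdl (m+1)).2, lF, ← hAdef] at hswap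
  have heven : (-1 : ℂ) ^ ((m + 2) * (m + 1)) = 1 := by
    rw [mul_comm]; exact (Nat.even_mul_succ_self (m+1)).neg_one_pow
  rw [heven, one_mul] at hswap
  have hFev : ∀ x ∈ (Φ (m+1)).roots, F.eval x = -cn * (Φ m).eval x := by
    intro x hx
    have hx0 : (Φ (m+1)).eval x = 0 := isRoot_of_mem_roots hx
    rw [hFdef, hr2]
    simp [hx0, hcndef]
  have key3 : ((Φ (m+1)).roots.map (fun x => F.eval x)).prod
      = (-cn) ^ (m+1) * ((Φ (m+1)).roots.map (fun x => (Φ m).eval x)).prod := by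
    rw [Multiset.map_congr rfl hFev, prod_map_const_mul, cardΦ]
  have key4 := lemC a b c Φ habc h0 h1 hrec (m+1) (by omega)
  simp only [Nat.add_sub_cancel] at key4
  rw [← hAdef] at key4
  have key4' : ((Φ (m+1)).roots.map (fun x => (Φ m).eval x)).prod
      = ((-1 : ℂ) ^ ((m + 1) * m / 2) *
          ∏ k ∈ Icc 1 (m+1), a k ^ (2 * (m + 1 - k)) * c k ^ (k - 1)) / A ^ m := by
    rw [eq_div_iff (pow_ne_zero m hA), ← key4]
    ring
  have hZ : (∏ k ∈ Icc 1 (m+2), a k ^ (2 * ((m + 2 : ℕ) : ℤ) - 2 * (k : ℤ) - 1) * c k ^ (k - 1))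
      = ((∏ k ∈ Icc 1 (m+1), a k ^ (2 * (m + 1 - k)) * c k ^ (k - 1)) * A) *
        (an⁻¹ * cn ^ (m+1)) := by
    rw [prod_Icc_succ_top (show 1 ≤ m + 2 by omega)]
    congr 1
    · rw [hAdef, ← prod_mul_distrib]
      apply prod_congr rfl
      intro k hk
      have hk' := mem_Icc.mp hk
      have hcast : (2 * ((m + 2 : ℕ) : ℤ) - 2 * (k : ℤ) - 1) = ((2 * (m + 1 - k) + 1 : ℕ) : ℤ) := by
        omega
      rw [hcast, zpow_natCast, pow_succ]
      ring
    · have hc1 : (2 * ((m + 2 : ℕ) : ℤ) - 2 * ((m + 2 : ℕ) : ℤ) - 1) = -1 := by ring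
      rw [hc1, zpow_neg_one]
      simp only [Nat.add_sub_cancel, handef, hcndef]
  have hsign : ((-1 : ℂ)) ^ ((m+2) * (m + 2 + 1) / 2)
      = -((-1 : ℂ) ^ ((m+1) * m / 2)) := by
    obtain ⟨i, hi⟩ := Nat.even_mul_succ_self m
    have e3 : (m + 2) * (m + 2 + 1) = 2 * (i + 2 * m + 3) := by
      have : (m + 2) * (m + 2 + 1) = m * (m + 1) + 2 * (2 * m + 3) := by ring
      omega
    have e4 : (m + 1) * m = 2 * i := by
      have : (m + 1) * m = m * (m + 1) := by ring
      omega
    rw [e3, e4, Nat.mul_div_cancel_left _ (by norm_num), Nat.mul_div_cancel_left _ (by norm_num)]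
    rw [show i + 2 * m + 3 = i + (2 * m + 3) from rfl, pow_add]
    have : (-1 : ℂ) ^ (2 * m + 3) = -1 := Odd.neg_one_pow ⟨m + 1, by ring⟩
    rw [this]; ring
  show F.leadingCoeff ^ Ψ.natDegree * (F.roots.map (fun x => Ψ.eval x)).prod = _
  rw [dΨ, lF, hsign, key5, hZ]
  refine mul_left_cancel₀ (pow_ne_zero (m+2) hcn) ?_
  rw [mul_left_comm, key1, key2, mul_left_comm ((A * an) ^ (m+1)), hswap, key3, key4']
  rcases Nat.even_or_odd m with hm | hm
  · have hm2 : Even (m + 2) := by rcases hm with ⟨j, hj⟩; exact ⟨j+1, by omega⟩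
    have u1 : (-(an * t)) ^ (m+2) = (an * t) ^ (m+2) := hm2.neg_pow _
    have u2 : (-cn) ^ (m+1) = -(cn ^ (m+1)) := (hm.add_one).neg_pow _
    rw [u1, u2]
    field_simp
    rw [one_div, inv_pow]
    field_simp
    ring
  · have hm2 : Odd (m + 2) := by rcases hm with ⟨j, hj⟩; exact ⟨j+1, by omega⟩
    have u1 : (-(an * t)) ^ (m+2) = -((an * t) ^ (m+2)) := hm2.neg_pow _
    have u2 : (-cn) ^ (m+1) = cn ^ (m+1) := (hm.add_one).neg_pow _
    rw [u1, u2]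
    field_simp
    rw [one_div, inv_pow]
    field_simp
    ring
end

section
/- Let U_{n;c}(x) = U_n(x) + c·U_{n−1}(x) with U_m the Chebyshev polynomial of the second kind. For n ≥ 2 and constants s, t with t ≠ 0: Res(U_{n;s}, U_{n−1;t}) = (−1)^{n(n+1)/2} · 2^{n(n−1)} · t^n · U_{n;s}(−(1+st)/(2t)). -/
open Polynomial Polynomial.Chebyshev

lemma two_C : (2 : ℂ[X]) = C 2 := by
  have := Polynomial.C_eq_natCast (R := ℂ) 2
  norm_num at this
  exact this.symm

lemma lc_two : (2 : ℂ[X]).leadingCoeff = 2 := by rw [two_C, leadingCoeff_C]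

lemma U_deg : ∀ n : ℕ, (U ℂ (n:ℤ)).natDegree = n ∧ (U ℂ (n:ℤ)).leadingCoeff = 2^n
  | 0 => by simp [U_zero]
  | 1 => by
      push_cast
      refine ⟨by simp [U_one], ?_⟩
      rw [U_one, leadingCoeff_mul, lc_two, leadingCoeff_X]
      norm_num
  | (n+2) => by
      obtain ⟨h1d, h1l⟩ := U_deg (n+1)
      obtain ⟨h0d, h0l⟩ := U_deg n
      push_cast at h1d h1l ⊢
      have hrec : U ℂ ((n:ℤ)+2) = 2 * X * U ℂ ((n:ℤ)+1) - U ℂ n := U_add_two ℂ n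
      have hU1 : U ℂ ((n:ℤ)+1) ≠ 0 := by
        intro h; rw [h] at h1l; simp at h1l
        exact (pow_ne_zero _ two_ne_zero) h1l.symm
      have hmul : (2 * X * U ℂ ((n:ℤ)+1)).natDegree = n + 2 := by
        rw [natDegree_mul (by norm_num : (2*X:ℂ[X]) ≠ 0) hU1, h1d]
        simp [natDegree_X]; ring
      have hmull : (2 * X * U ℂ ((n:ℤ)+1)).leadingCoeff = 2 ^ (n+2) := by
        rw [leadingCoeff_mul, leadingCoeff_mul, lc_two, leadingCoeff_X, h1l]
        ring
      have hlt : (U ℂ (n:ℤ)).degree < (2 * X * U ℂ ((n:ℤ)+1)).degree := by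
        have h2 : (2 * X * U ℂ ((n:ℤ)+1)) ≠ 0 := by
          intro h; rw [h] at hmull; simp at hmull
          exact (pow_ne_zero _ two_ne_zero) hmull.symm
        rw [degree_eq_natDegree h2, hmul]
        calc (U ℂ (n:ℤ)).degree ≤ n := degree_le_natDegree.trans (by exact_mod_cast le_of_eq (by rw [h0d]))
        _ < ((n+2 : ℕ) : WithBot ℕ) := by exact_mod_cast by omega
      constructor
      · rw [hrec, ← hmul]
        exact natDegree_sub_eq_left_of_natDegree_lt (by rw [hmul, h0d]; omega)
      · rw [hrec, leadingCoeff_sub_of_degree_lt hlt, hmull]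

lemma U_ne_zero (n : ℕ) : U ℂ (n:ℤ) ≠ 0 := by
  intro h
  have h2 := (U_deg n).2
  rw [h] at h2; simp at h2
  exact (pow_ne_zero _ two_ne_zero) h2.symm

lemma roots_card (p : ℂ[X]) : p.roots.card = p.natDegree := by
  rcases eq_or_ne p 0 with h | h
  · simp [h]
  · exact splits_iff_card_roots.mp (IsAlgClosed.splits p)

lemma eval_eq (p : ℂ[X]) (x : ℂ) :
    p.eval x = p.leadingCoeff * ((p.roots.map (fun a => x - a)).prod) := by
  conv_lhs => rw [Splits.eq_prod_roots (IsAlgClosed.splits p)]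
  rw [eval_mul, eval_C, eval_multiset_prod, Multiset.map_map]
  simp

lemma prod_const_mul (s : Multiset ℂ) (c : ℂ) (F : ℂ → ℂ) :
    (s.map (fun a => c * F a)).prod = c ^ s.card * (s.map F).prod := by
  rw [show (fun a => c * F a) = (fun a => (fun _ => c) a * F a) from rfl,
    Multiset.prod_map_mul]
  simp [Multiset.map_const']

lemma Res_eq (f g : ℂ[X]) :
    Res f g = f.leadingCoeff ^ g.natDegree * g.leadingCoeff ^ f.natDegree *
      ((f.roots.map (fun a => (g.roots.map (fun b => a - b)).prod)).prod) := by
  unfold Res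
  rw [Multiset.map_congr rfl (fun a _ => eval_eq g a), prod_const_mul, roots_card]
  ring

lemma Res_symm (f g : ℂ[X]) :
    Res f g = (-1)^(f.natDegree * g.natDegree) * Res g f := by
  rw [Res_eq f g, Res_eq g f]
  have key : (f.roots.map (fun a => (g.roots.map (fun b => a - b)).prod)).prod
      = (-1)^(f.natDegree * g.natDegree) *
        (g.roots.map (fun b => (f.roots.map (fun a => b - a)).prod)).prod := by
    have step : ∀ a : ℂ, (g.roots.map (fun b => a - b)).prod
        = (-1)^g.natDegree * (g.roots.map (fun b => b - a)).prod := by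
      intro a
      rw [Multiset.map_congr rfl (fun b _ => by ring_nf : ∀ b ∈ g.roots, a - b = (-1) * (b - a)),
        prod_const_mul, roots_card]
    rw [Multiset.map_congr rfl (fun a _ => step a), prod_const_mul, roots_card, ← pow_mul,
      Multiset.prod_map_prod_map, Nat.mul_comm g.natDegree f.natDegree]
  rw [key]; ring

lemma degree_C_mul_lt (c : ℂ) (p q : ℂ[X]) (h : q.degree < p.degree) :
    (C c * q).degree < p.degree :=
  lt_of_le_of_lt (le_trans (degree_mul_le _ _)
    (by simpa using add_le_add_left (degree_C_le (a := c)) q.degree)) h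

lemma comb_deg (p q : ℂ[X]) (c : ℂ) (h : q.degree < p.degree) :
    (p + C c * q).natDegree = p.natDegree ∧ (p + C c * q).leadingCoeff = p.leadingCoeff :=
  ⟨natDegree_add_eq_left_of_degree_lt (degree_C_mul_lt c p q h),
   leadingCoeff_add_of_degree_lt' (degree_C_mul_lt c p q h)⟩

lemma U_deg_lt (a b : ℕ) (h : a < b) : (U ℂ (a:ℤ)).degree < (U ℂ (b:ℤ)).degree := by
  rw [degree_eq_natDegree (U_ne_zero a), degree_eq_natDegree (U_ne_zero b),
    (U_deg a).1, (U_deg b).1]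
  exact_mod_cast h

lemma tri (m : ℕ) : (m+1) + m*(m+1)/2 = (m+1)*(m+2)/2 := by
  obtain ⟨k, hk⟩ := Nat.even_mul_succ_self m
  have h2 : (m+1)*(m+2) = 2*(m+1) + m*(m+1) := by ring
  omega

lemma neg_one_even (m : ℕ) : ((-1:ℂ))^((m+1)*m) = 1 := by
  obtain ⟨k, hk⟩ := Nat.even_mul_succ_self m
  rw [mul_comm, hk, show k + k = 2*k by ring, pow_mul]
  norm_num

lemma prodU : ∀ m : ℕ, ((U ℂ (m:ℤ)).roots.map
    (fun b => (U ℂ ((m:ℤ)+1)).eval b)).prod = (-1:ℂ)^(m*(m+1)/2)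
  | 0 => by simp [U_zero]
  | (m+1) => by
    have ih := prodU m
    push_cast
    have hcard : (U ℂ ((m:ℤ)+1)).roots.card = m + 1 := by
      have h1 := roots_card (U ℂ ((m:ℤ)+1))
      have hd := (U_deg (m+1)).1
      push_cast at hd
      rw [h1, hd]
    have step : ∀ b ∈ (U ℂ ((m:ℤ)+1)).roots,
        (U ℂ ((m:ℤ)+1+1)).eval b = (-1) * (U ℂ (m:ℤ)).eval b := by
      intro b hb
      have hroot : (U ℂ ((m:ℤ)+1)).eval b = 0 := (mem_roots'.mp hb).2
      have h2 := U_add_two ℂ m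
      rw [show (m:ℤ)+1+1 = (m:ℤ)+2 by ring, h2]
      simp [hroot]
    rw [Multiset.map_congr rfl step, prod_const_mul, hcard]
    have hb : ((U ℂ ((m:ℤ)+1)).roots.map (fun b => (U ℂ (m:ℤ)).eval b)).prod
        = (-1:ℂ)^(m*(m+1)/2) := by
      have e1 : Res (U ℂ ((m:ℤ)+1)) (U ℂ (m:ℤ))
          = (2:ℂ)^((m+1)*m) * ((U ℂ ((m:ℤ)+1)).roots.map (fun b => (U ℂ (m:ℤ)).eval b)).prod := by
        unfold Res
        have hd := (U_deg m).1
        have hl := (U_deg (m+1)).2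
        push_cast at hl
        rw [hd, hl, ← pow_mul]
      have e2 : Res (U ℂ (m:ℤ)) (U ℂ ((m:ℤ)+1))
          = (2:ℂ)^(m*(m+1)) * (-1:ℂ)^(m*(m+1)/2) := by
        unfold Res
        have hd := (U_deg (m+1)).1
        have hl := (U_deg m).2
        push_cast at hd
        rw [hd, hl, ← pow_mul, ih]
      have e3 := Res_symm (U ℂ ((m:ℤ)+1)) (U ℂ (m:ℤ))
      have hdm := (U_deg m).1
      have hdm1 := (U_deg (m+1)).1
      push_cast at hdm1
      rw [hdm, hdm1, e2, neg_one_even, one_mul, e1] at e3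
      have h4 : (2:ℂ)^((m+1)*m) = 2^(m*(m+1)) := by rw [Nat.mul_comm]
      rw [h4] at e3
      exact mul_left_cancel₀ (pow_ne_zero _ two_ne_zero) e3
    rw [hb, ← pow_add, show (m+1) + m*(m+1)/2 = (m+1)*(m+1+1)/2 from tri m]

theorem stmt_9 (n : ℕ) (hn : 2 ≤ n) (s t : ℂ) (ht : t ≠ 0) :
    Res (U ℂ n + C s * U ℂ ((n : ℤ) - 1)) (U ℂ ((n : ℤ) - 1) + C t * U ℂ ((n : ℤ) - 2)) =
      (-1) ^ (n * (n + 1) / 2) * 2 ^ (n * (n - 1)) * t ^ n *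
        (U ℂ n + C s * U ℂ ((n : ℤ) - 1)).eval (-(1 + s * t) / (2 * t)) := by
  have e1 : (n:ℤ) - 1 = ((n-1:ℕ):ℤ) := by omega
  have e2 : (n:ℤ) - 2 = ((n-2:ℕ):ℤ) := by omega
  set f := U ℂ (n:ℤ) + C s * U ℂ ((n : ℤ) - 1) with hf
  set g := U ℂ ((n : ℤ) - 1) + C t * U ℂ ((n : ℤ) - 2) with hg
  set r := -(1 + s * t) / (2 * t) with hr
  have hf_spec := comb_deg (U ℂ (n:ℤ)) (U ℂ ((n:ℤ)-1)) s
    (by rw [e1]; exact U_deg_lt _ _ (by omega))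
  have hfd : f.natDegree = n := by rw [hf, hf_spec.1, (U_deg n).1]
  have hfl : f.leadingCoeff = 2^n := by rw [hf, hf_spec.2, (U_deg n).2]
  have hg_spec := comb_deg (U ℂ ((n:ℤ)-1)) (U ℂ ((n:ℤ)-2)) t
    (by rw [e1, e2]; exact U_deg_lt _ _ (by omega))
  have hgd : g.natDegree = n - 1 := by
    rw [hg, hg_spec.1, e1, (U_deg (n-1)).1]
  have hcard : f.roots.card = n := by rw [roots_card, hfd]
  have step : ∀ a ∈ f.roots, g.eval a
      = (2*t) * ((a - r) * (U ℂ ((n:ℤ)-1)).eval a) := by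
    intro a ha
    have hroot : f.eval a = 0 := (mem_roots'.mp ha).2
    rw [hf] at hroot
    simp only [eval_add, eval_mul, eval_C] at hroot
    have hUn : (U ℂ (n:ℤ)).eval a = -(s * (U ℂ ((n:ℤ)-1)).eval a) := by
      linear_combination hroot
    have hsub : (U ℂ ((n:ℤ)-2)) = 2 * X * U ℂ ((n:ℤ)-1) - U ℂ (n:ℤ) := U_sub_two ℂ n
    rw [hg]
    simp only [eval_add, eval_mul, eval_C, hsub, eval_sub, eval_ofNat, eval_X, hUn, hr]
    field_simp
    ring
  unfold Res
  rw [Multiset.map_congr rfl step, prod_const_mul, hcard, hfl, hgd,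
    Multiset.prod_map_mul]
  have hlin : (f.roots.map (fun a => a - r)).prod = (-1:ℂ)^n * (f.eval r / 2^n) := by
    have he := eval_eq f r
    rw [hfl] at he
    have h2 : (f.roots.map (fun a => a - r)).prod
        = (-1:ℂ)^n * (f.roots.map (fun a => r - a)).prod := by
      rw [Multiset.map_congr rfl
          (fun a _ => by ring : ∀ a ∈ f.roots, a - r = (-1) * (r - a)),
        prod_const_mul, hcard]
    rw [h2, he]
    field_simp
  have hP : (f.roots.map (fun a => (U ℂ ((n:ℤ)-1)).eval a)).prod = (-1:ℂ)^((n-1)*n/2) := by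
    have eA : Res f (U ℂ ((n:ℤ)-1))
        = (2:ℂ)^(n*(n-1)) * (f.roots.map (fun a => (U ℂ ((n:ℤ)-1)).eval a)).prod := by
      unfold Res
      rw [hfl, e1, (U_deg (n-1)).1, ← pow_mul]
    have stepB : ∀ b ∈ (U ℂ ((n:ℤ)-1)).roots, f.eval b = (U ℂ (n:ℤ)).eval b := by
      intro b hb
      have hroot : (U ℂ ((n:ℤ)-1)).eval b = 0 := (mem_roots'.mp hb).2
      rw [hf]; simp [hroot]
    have hprodU : ((U ℂ ((n:ℤ)-1)).roots.map (fun b => (U ℂ (n:ℤ)).eval b)).prod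
        = (-1:ℂ)^((n-1)*n/2) := by
      have := prodU (n-1)
      rw [show ((n-1:ℕ):ℤ)+1 = (n:ℤ) by omega, ← e1,
        show (n-1)*((n-1)+1)/2 = (n-1)*n/2 by rw [show n-1+1 = n by omega]] at this
      exact this
    have eB : Res (U ℂ ((n:ℤ)-1)) f = (2:ℂ)^((n-1)*n) * (-1:ℂ)^((n-1)*n/2) := by
      unfold Res
      rw [e1, (U_deg (n-1)).2, hfd, ← pow_mul, ← e1,
        Multiset.map_congr rfl stepB, hprodU]
    have e3 := Res_symm f (U ℂ ((n:ℤ)-1))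
    rw [hfd, e1, (U_deg (n-1)).1, ← e1, eA, eB] at e3
    have hev : ((-1:ℂ))^(n*(n-1)) = 1 := by
      have := neg_one_even (n-1)
      rwa [show n-1+1 = n by omega] at this
    have h4 : (2:ℂ)^((n-1)*n) = 2^(n*(n-1)) := by rw [Nat.mul_comm]
    rw [hev, one_mul, h4] at e3
    exact mul_left_cancel₀ (pow_ne_zero _ two_ne_zero) e3
  rw [hlin, hP]
  have hsign : (-1:ℂ)^n * (-1:ℂ)^((n-1)*n/2) = (-1:ℂ)^(n*(n+1)/2) := by
    rw [← pow_add]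
    congr 1
    have h := tri (n-1)
    rwa [show n-1+1 = n by omega, show n-1+2 = n+1 by omega] at h
  rw [← hsign, div_eq_mul_inv, ← pow_mul, mul_pow]
  have h2n : (2:ℂ)^n ≠ 0 := pow_ne_zero _ two_ne_zero
  field_simp
end

section
/- For the Hermite polynomials H_m and H_{n;c} := H_n + c·H_{n−1}, for n ≥ 2 and constants s, t with t ≠ 0: Res(H_{n;s}, H_{n−1;t}) = (−1)^{n(n+1)/2} · 2^{n(3n−5)/2} / (n−1)^n · ∏_{k=1}^{n−1} k^k · t^n · H_{n;s}(−(2(n−1)+st)/(2t)). -/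
open Polynomial

/-- The physicists' Hermite polynomials. -/
noncomputable def H : ℕ → Polynomial ℂ
  | 0 => 1
  | 1 => 2 * X
  | (n + 2) => 2 * X * H (n + 1) - C (2 * (n + 1 : ℂ)) * H n

lemma H_add_two (n : ℕ) : H (n + 2) = 2 * X * H (n + 1) - C (2 * (n + 1 : ℂ)) * H n := rfl

lemma H_deg_lc : ∀ n : ℕ, (H n).degree = (n : WithBot ℕ) ∧ (H n).leadingCoeff = 2 ^ n := by
  intro n
  induction n using Nat.strong_induction_on with
  | _ n ih =>
    match n with
    | 0 => constructor <;> simp [H]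
    | 1 =>
      constructor
      · show (2 * X : ℂ[X]).degree = 1
        rw [(map_ofNat C 2).symm, degree_mul, degree_X, degree_C (by norm_num : (2:ℂ) ≠ 0)]
        rfl
      · show (2 * X : ℂ[X]).leadingCoeff = 2 ^ 1
        rw [(map_ofNat C 2).symm, leadingCoeff_mul, leadingCoeff_X, leadingCoeff_C]
        norm_num
    | (k + 2) =>
      obtain ⟨d1, l1⟩ := ih (k + 1) (by omega)
      obtain ⟨d0, l0⟩ := ih k (by omega)
      rw [H_add_two]
      have hd2 : (2 * X * H (k + 1)).degree = ((k + 2 : ℕ) : WithBot ℕ) := by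
        rw [degree_mul, degree_mul, degree_X, d1]
        rw [(map_ofNat C 2).symm, degree_C (by norm_num : (2:ℂ) ≠ 0)]
        push_cast
        ring
      have hlt : (C (2 * (k + 1 : ℂ)) * H k).degree < (2 * X * H (k + 1)).degree := by
        rw [hd2]
        have h1 : (C (2 * (k + 1 : ℂ)) * H k).degree ≤ (k : WithBot ℕ) := by
          refine (degree_mul_le _ _).trans ?_
          rw [d0]
          exact le_trans (add_le_add_left degree_C_le _) (by simp)
        exact lt_of_le_of_lt h1 (by exact_mod_cast WithBot.coe_lt_coe.mpr (by omega))
      constructor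
      · rw [degree_sub_eq_left_of_degree_lt hlt, hd2]
      · rw [leadingCoeff_sub_of_degree_lt hlt]
        rw [leadingCoeff_mul, leadingCoeff_mul, leadingCoeff_X, l1]
        rw [(map_ofNat C 2).symm, leadingCoeff_C]
        ring

lemma H_ne (n : ℕ) : H n ≠ 0 := fun h => by
  have := (H_deg_lc n).1
  rw [h, degree_zero] at this
  exact (by simp : (⊥ : WithBot ℕ) ≠ (n : WithBot ℕ)) this

lemma H_natDegree (n : ℕ) : (H n).natDegree = n :=
  natDegree_eq_of_degree_eq_some (H_deg_lc n).1

lemma H_lc (n : ℕ) : (H n).leadingCoeff = 2 ^ n := (H_deg_lc n).2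

lemma card_roots_eq_s10 (f : ℂ[X]) : Multiset.card f.roots = f.natDegree :=
  splits_iff_card_roots.mp (IsAlgClosed.splits f)

lemma prod_map_const_mul_s10 (M : Multiset ℂ) (c : ℂ) (F : ℂ → ℂ) :
    (M.map fun b => c * F b).prod = c ^ (Multiset.card M) * (M.map F).prod := by
  rw [Multiset.prod_map_mul (f := fun _ => c) (g := F)]
  congr 1
  simp

lemma eval_eq_prod_s10 (g : ℂ[X]) (x : ℂ) :
    g.eval x = g.leadingCoeff * (g.roots.map (fun b => x - b)).prod := by
  conv_lhs => rw [(IsAlgClosed.splits g).eq_prod_roots]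
  rw [eval_mul, eval_C, eval_multiset_prod, Multiset.map_map]
  simp

lemma Res_eval_prod (u v : ℂ[X]) :
    (u.roots.map fun a => v.eval a).prod
      = v.leadingCoeff ^ u.natDegree
        * (u.roots.map fun a => (v.roots.map fun b => a - b).prod).prod := by
  rw [Multiset.map_congr rfl (fun a _ => eval_eq_prod_s10 v a), prod_map_const_mul_s10, card_roots_eq_s10]

lemma Res_swap (f g : ℂ[X]) :
    Res f g = (-1) ^ (f.natDegree * g.natDegree) * Res g f := by
  unfold Res
  rw [Res_eval_prod f g, Res_eval_prod g f]
  have h1 : (f.roots.map fun a => (g.roots.map fun b => a - b).prod).prod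
      = (-1 : ℂ) ^ (f.natDegree * g.natDegree)
        * (g.roots.map fun b => (f.roots.map fun a => b - a).prod).prod := by
    have h2 : ∀ a : ℂ, (g.roots.map fun b => a - b).prod
        = (-1 : ℂ) ^ g.natDegree * (g.roots.map fun b => b - a).prod := by
      intro a
      rw [Multiset.map_congr rfl (fun b _ => by ring : ∀ b ∈ g.roots, a - b = (-1) * (b - a)),
        prod_map_const_mul_s10, card_roots_eq_s10]
    rw [Multiset.map_congr rfl (fun a _ => h2 a), prod_map_const_mul_s10, card_roots_eq_s10,
      ← pow_mul, Multiset.prod_map_prod_map]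
    ring
  rw [h1]
  ring

lemma Res_H_chain : ∀ m : ℕ,
    Res (H m) (H (m + 1)) = ∏ k ∈ Finset.Icc 1 m, ((-8 : ℂ) * k) ^ k := by
  intro m
  induction m with
  | zero => simp [Res, H, H_natDegree]
  | succ m IH =>
    have hcard : Multiset.card (H (m + 1)).roots = m + 1 := by
      rw [card_roots_eq_s10, H_natDegree]
    -- pointwise evaluation at roots of H (m+1)
    have hpt : ∀ a ∈ (H (m + 1)).roots,
        (H (m + 2)).eval a = (-2 * ((m : ℂ) + 1)) * (H m).eval a := by
      intro a ha
      have h0 : (H (m + 1)).eval a = 0 := (mem_roots'.mp ha).2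
      rw [H_add_two]
      simp [h0]
    have hstep : ((H (m + 1)).roots.map fun a => (H (m + 2)).eval a).prod
        = (-2 * ((m : ℂ) + 1)) ^ (m + 1)
          * ((H (m + 1)).roots.map fun a => (H m).eval a).prod := by
      rw [Multiset.map_congr rfl hpt, prod_map_const_mul_s10, hcard]
    -- relate to Res (H m) (H (m+1)) by swapping
    have hP : ((2 : ℂ) ^ (m + 1)) ^ m * ((H (m + 1)).roots.map fun a => (H m).eval a).prod
        = ∏ k ∈ Finset.Icc 1 m, ((-8 : ℂ) * k) ^ k := by
      have hsw := Res_swap (H (m + 1)) (H m)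
      rw [H_natDegree, H_natDegree] at hsw
      have heven : ((-1 : ℂ)) ^ ((m + 1) * m) = 1 :=
        Even.neg_one_pow (by rw [mul_comm]; exact Nat.even_mul_succ_self m)
      rw [heven, one_mul] at hsw
      have : Res (H (m + 1)) (H m) = ((2 : ℂ) ^ (m + 1)) ^ m
          * ((H (m + 1)).roots.map fun a => (H m).eval a).prod := by
        unfold Res; rw [H_lc, H_natDegree]
      rw [this] at hsw
      rw [hsw, IH]
    -- assemble
    unfold Res
    rw [H_lc, H_natDegree, hstep]
    rw [Finset.prod_Icc_succ_top (by omega : 1 ≤ m + 1)]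
    have e3 : (2 : ℂ) ^ (m + 1) * 2 ^ (m + 1) = 4 ^ (m + 1) := by
      rw [← mul_pow]; norm_num
    have hsplit : ((-8 : ℂ) * ((m : ℕ) + 1 : ℕ)) ^ (m + 1)
        = 4 ^ (m + 1) * (-2 * ((m : ℂ) + 1)) ^ (m + 1) := by
      rw [← mul_pow]
      congr 1
      push_cast
      ring
    rw [hsplit]
    linear_combination ((4 : ℂ) ^ (m + 1) * (-2 * ((m : ℂ) + 1)) ^ (m + 1)) * hP
      + (((2 : ℂ) ^ (m + 1)) ^ m * ((H (m + 1)).roots.map fun a => (H m).eval a).prod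
          * (-2 * ((m : ℂ) + 1)) ^ (m + 1)) * e3

lemma comb_deg_lc (k : ℕ) (a : ℂ) :
    (H (k + 1) + C a * H k).degree = ((k + 1 : ℕ) : WithBot ℕ) ∧
      (H (k + 1) + C a * H k).leadingCoeff = 2 ^ (k + 1) := by
  have hlt : (C a * H k).degree < (H (k + 1)).degree := by
    rw [(H_deg_lc (k + 1)).1]
    have h1 : (C a * H k).degree ≤ (k : WithBot ℕ) := by
      refine (degree_mul_le _ _).trans ?_
      rw [(H_deg_lc k).1]
      exact le_trans (add_le_add_left degree_C_le _) (by simp)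
    exact lt_of_le_of_lt h1 (by exact_mod_cast WithBot.coe_lt_coe.mpr (by omega))
  exact ⟨by rw [degree_add_eq_left_of_degree_lt hlt, (H_deg_lc (k + 1)).1],
         by rw [leadingCoeff_add_of_degree_lt' hlt, (H_deg_lc (k + 1)).2]⟩

lemma gauss : ∀ m : ℕ, 2 * (∑ k ∈ Finset.Icc 1 m, k) = m * (m + 1) := by
  intro m
  induction m with
  | zero => simp
  | succ k IHk =>
    rw [Finset.sum_Icc_succ_top (by omega : 1 ≤ k + 1)]
    have h : (k + 1) * (k + 1 + 1) = k * (k + 1) + 2 * (k + 1) := by ring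
    omega

theorem stmt_10 (n : ℕ) (hn : 2 ≤ n) (s t : ℂ) (ht : t ≠ 0) :
    Res (H n + C s * H (n - 1)) (H (n - 1) + C t * H (n - 2)) =
      (-1) ^ (n * (n + 1) / 2) * 2 ^ (n * (3 * n - 5) / 2) / ((n : ℂ) - 1) ^ n *
        (∏ k ∈ Finset.Icc 1 (n - 1), (k : ℂ) ^ k) * t ^ n *
        (H n + C s * H (n - 1)).eval (-(2 * ((n : ℂ) - 1) + s * t) / (2 * t)) := by

  obtain ⟨m, rfl⟩ : ∃ m, n = m + 2 := ⟨n - 2, by omega⟩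
  clear hn
  simp only [show m + 2 - 1 = m + 1 by omega, show m + 2 - 2 = m by omega]
  set μ : ℂ := (m : ℂ) + 1 with hμ_def
  have hμ : μ ≠ 0 := by
    rw [hμ_def, show ((m : ℂ) + 1) = ((m + 1 : ℕ) : ℂ) by push_cast; ring]
    exact Nat.cast_ne_zero.mpr (Nat.succ_ne_zero m)
  have hcast : ((m + 2 : ℕ) : ℂ) - 1 = μ := by rw [hμ_def]; push_cast; ring
  rw [hcast]
  set f : ℂ[X] := H (m + 2) + C s * H (m + 1) with hf_def
  set g : ℂ[X] := H (m + 1) + C t * H m with hg_def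
  set x0 : ℂ := -(2 * μ + s * t) / (2 * t) with hx0_def
  set p : ℂ[X] := C (2 * t) * X + C (2 * μ + s * t) with hp_def
  -- basic degree facts
  have hgnd : g.natDegree = m + 1 := natDegree_eq_of_degree_eq_some (comb_deg_lc m t).1
  have hglc : g.leadingCoeff = 2 ^ (m + 1) := (comb_deg_lc m t).2
  have hfnd : f.natDegree = m + 2 := natDegree_eq_of_degree_eq_some (comb_deg_lc (m + 1) s).1
  have hgcard : Multiset.card g.roots = m + 1 := by rw [card_roots_eq_s10, hgnd]
  have h2t : (2 * t : ℂ) ≠ 0 := by simp [ht]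
  have hcx : 2 * t * x0 = -(2 * μ + s * t) := by rw [hx0_def]; field_simp
  have hpfac : p = C (2 * t) * (X - C x0) := by
    rw [hp_def, mul_sub, ← C_mul, hcx, map_neg, sub_neg_eq_add]
  have hproots : p.roots = {x0} := by rw [hpfac, roots_C_mul _ h2t, roots_X_sub_C]
  have hpnd : p.natDegree = 1 := by rw [hpfac, natDegree_C_mul h2t, natDegree_X_sub_C]
  have hplc : p.leadingCoeff = 2 * t := by
    rw [hpfac, leadingCoeff_mul, leadingCoeff_C, (monic_X_sub_C x0).leadingCoeff, mul_one]
  -- key polynomial identity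
  have hid : C t * f = p * H (m + 1) - C (2 * μ) * g := by
    rw [hf_def, hg_def, hp_def, H_add_two, hμ_def]
    simp only [map_mul, map_add, map_one, map_ofNat]
    ring
  have hpx0 : p.eval x0 = 0 := by
    have h1 : p.eval x0 = 2 * t * x0 + (2 * μ + s * t) := by simp [hp_def]
    rw [h1, hcx]; ring
  have hgx0 : 2 * μ * g.eval x0 = -(t * f.eval x0) := by
    have h := congrArg (eval x0) hid
    simp only [eval_mul, eval_sub, eval_C] at h
    rw [hpx0] at h
    linear_combination h
  -- pointwise facts at roots of g
  have hpt1 : ∀ β ∈ g.roots, t * f.eval β = p.eval β * (H (m + 1)).eval β := by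
    intro β hβ
    have h0 : g.eval β = 0 := (mem_roots'.mp hβ).2
    have h := congrArg (eval β) hid
    simp only [eval_mul, eval_sub, eval_C] at h
    rw [h0] at h
    linear_combination h
  have hpt2 : ∀ β ∈ g.roots, (H (m + 1)).eval β = -t * (H m).eval β := by
    intro β hβ
    have h0 : g.eval β = 0 := (mem_roots'.mp hβ).2
    rw [hg_def] at h0
    simp only [eval_add, eval_mul, eval_C] at h0
    linear_combination h0
  -- products over the roots of g
  have hi : t ^ (m + 1) * (g.roots.map fun a => f.eval a).prod
      = (g.roots.map fun a => p.eval a).prod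
        * (g.roots.map fun a => (H (m + 1)).eval a).prod := by
    have h1 : (g.roots.map fun a => t * f.eval a)
        = (g.roots.map fun a => p.eval a * (H (m + 1)).eval a) :=
      Multiset.map_congr rfl hpt1
    have h2 := congrArg Multiset.prod h1
    rw [prod_map_const_mul_s10, hgcard, Multiset.prod_map_mul] at h2
    exact h2
  have hQ1 : (g.roots.map fun a => (H (m + 1)).eval a).prod
      = (-t) ^ (m + 1) * (g.roots.map fun a => (H m).eval a).prod := by
    have h1 : (g.roots.map fun a => (H (m + 1)).eval a)
        = (g.roots.map fun a => -t * (H m).eval a) :=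
      Multiset.map_congr rfl hpt2
    have h2 := congrArg Multiset.prod h1
    rw [prod_map_const_mul_s10, hgcard] at h2
    exact h2
  have hPpv : 2 ^ (m + 1) * (g.roots.map fun a => p.eval a).prod
      = (-1) ^ (m + 1) * ((2 * t) ^ (m + 1) * g.eval x0) := by
    have hsw := Res_swap g p
    unfold Res at hsw
    rw [hglc, hplc, hgnd, hpnd, hproots, pow_one, mul_one] at hsw
    simp only [Multiset.map_singleton, Multiset.prod_singleton] at hsw
    exact hsw
  have hQ0v : ((2 : ℂ) ^ (m + 1)) ^ m * (g.roots.map fun a => (H m).eval a).prod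
      = ∏ k ∈ Finset.Icc 1 m, ((-8 : ℂ) * k) ^ k := by
    have hsw := Res_swap g (H m)
    unfold Res at hsw
    rw [hglc, H_lc, hgnd, H_natDegree] at hsw
    rw [show ((-1 : ℂ)) ^ ((m + 1) * m) = 1 from
      Even.neg_one_pow (by rw [mul_comm]; exact Nat.even_mul_succ_self m), one_mul] at hsw
    have hpt3 : ∀ γ ∈ (H m).roots, g.eval γ = (H (m + 1)).eval γ := by
      intro γ hγ
      have h0 : (H m).eval γ = 0 := (mem_roots'.mp hγ).2
      rw [hg_def]
      simp [h0]
    have h4 : ((H m).roots.map fun a => g.eval a)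
        = ((H m).roots.map fun a => (H (m + 1)).eval a) :=
      Multiset.map_congr rfl hpt3
    rw [h4] at hsw
    have hch := Res_H_chain m
    unfold Res at hch
    rw [H_lc, H_natDegree] at hch
    exact hsw.trans hch
  -- assembling
  have hA : ((2 : ℂ) ^ (m + 1)) ≠ 0 := pow_ne_zero _ two_ne_zero
  have hneg : ((-1 : ℂ)) ^ (m + 1) * (-1) ^ (m + 1) = 1 := by
    rw [← pow_add]
    exact Even.neg_one_pow ⟨m + 1, by ring⟩
  have hswap : Res f g = Res g f := by
    have hsw := Res_swap f g
    rw [hfnd, hgnd] at hsw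
    rw [show ((-1 : ℂ)) ^ ((m + 2) * (m + 1)) = 1 from
      Even.neg_one_pow (by rw [mul_comm]; exact Nat.even_mul_succ_self (m + 1)), one_mul] at hsw
    exact hsw
  have hResgf : Res g f = ((2 : ℂ) ^ (m + 1)) ^ (m + 2) * (g.roots.map fun a => f.eval a).prod := by
    unfold Res
    rw [hglc, hfnd]
  have hPQ : 2 ^ (m + 1) * ((g.roots.map fun a => p.eval a).prod
        * (g.roots.map fun a => (H (m + 1)).eval a).prod)
      = 2 ^ (m + 1) * (t ^ (m + 1) * t ^ (m + 1) * g.eval x0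
        * (g.roots.map fun a => (H m).eval a).prod) := by
    rw [hQ1, neg_pow t]
    linear_combination (((-1 : ℂ)) ^ (m + 1) * t ^ (m + 1)
        * (g.roots.map fun a => (H m).eval a).prod) * hPpv
      + ((2 : ℂ) ^ (m + 1) * t ^ (m + 1) * t ^ (m + 1) * g.eval x0
        * (g.roots.map fun a => (H m).eval a).prod) * hneg
  have hFval : (g.roots.map fun a => f.eval a).prod
      = t ^ (m + 1) * g.eval x0 * (g.roots.map fun a => (H m).eval a).prod := by
    have h3 := mul_left_cancel₀ hA hPQ
    refine mul_left_cancel₀ (pow_ne_zero (m + 1) ht) ?_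
    rw [hi, h3]
    ring
  have hgx0v : g.eval x0 = -(t * f.eval x0) / (2 * μ) := by
    rw [eq_div_iff (by simp [hμ] : (2 * μ : ℂ) ≠ 0)]
    linear_combination hgx0
  have hQ0vv : (g.roots.map fun a => (H m).eval a).prod
      = (∏ k ∈ Finset.Icc 1 m, ((-8 : ℂ) * k) ^ k) / ((2 : ℂ) ^ (m + 1)) ^ m := by
    rw [eq_div_iff (pow_ne_zero m hA)]
    linear_combination hQ0v
  -- exponent arithmetic
  have hT2 := gauss m
  set T := ∑ k ∈ Finset.Icc 1 m, k with hT_def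
  have he1 : (m + 2) * (m + 2 + 1) / 2 = T + (2 * m + 3) := by
    have h : (m + 2) * (m + 2 + 1) = 2 * (T + (2 * m + 3)) := by
      calc (m + 2) * (m + 2 + 1) = m * (m + 1) + (4 * m + 6) := by ring
        _ = 2 * T + (4 * m + 6) := by rw [← hT2]
        _ = 2 * (T + (2 * m + 3)) := by ring
    omega
  have he2 : (m + 2) * (3 * (m + 2) - 5) / 2 = 3 * T + (2 * m + 1) := by
    have h0 : 3 * (m + 2) - 5 = 3 * m + 1 := by omega
    rw [h0]
    have h : (m + 2) * (3 * m + 1) = 2 * (3 * T + (2 * m + 1)) := by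
      calc (m + 2) * (3 * m + 1) = 3 * (m * (m + 1)) + (4 * m + 2) := by ring
        _ = 3 * (2 * T) + (4 * m + 2) := by rw [← hT2]
        _ = 2 * (3 * T + (2 * m + 1)) := by ring
    omega
  have hEm : (∏ k ∈ Finset.Icc 1 m, ((-8 : ℂ) * k) ^ k)
      = (-1) ^ T * 2 ^ (3 * T) * (∏ k ∈ Finset.Icc 1 m, (k : ℂ) ^ k) := by
    have h1 : ∀ k ∈ Finset.Icc 1 m, ((-8 : ℂ) * k) ^ k = (-1) ^ k * (2 ^ 3) ^ k * (k : ℂ) ^ k := by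
      intro k _
      rw [show ((-8 : ℂ)) = (-1) * 2 ^ 3 by norm_num, mul_pow, mul_pow]
    rw [Finset.prod_congr rfl h1, Finset.prod_mul_distrib, Finset.prod_mul_distrib,
      Finset.prod_pow_eq_pow_sum, Finset.prod_pow_eq_pow_sum, ← pow_mul]
  have hprodIcc : (∏ k ∈ Finset.Icc 1 (m + 1), (k : ℂ) ^ k)
      = μ ^ (m + 1) * (∏ k ∈ Finset.Icc 1 m, (k : ℂ) ^ k) := by
    rw [Finset.prod_Icc_succ_top (by omega : 1 ≤ m + 1), hμ_def]
    push_cast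
    ring
  have hsgn : ((-1 : ℂ)) ^ (T + (2 * m + 3)) = -(-1) ^ T := by
    rw [pow_add, show ((-1 : ℂ)) ^ (2 * m + 3) = -1 from Odd.neg_one_pow ⟨m + 1, by ring⟩]
    ring
  rw [hswap, hResgf, hFval, hgx0v, hQ0vv, hEm, he1, he2, hsgn, hprodIcc]
  field_simp
  ring
end

section
/- Let T_{n;c} = T_n + c·T_{n−1}. For c ≠ 0 with c² ≠ 1: disc(T_{n;c}) = 2^{(n−1)(n−2)} (2n−1)^n (−c)^n / (1 − c²) · T_{n;c}(−((n−1)c² + n)/((2n−1)c)). -/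
open Polynomial Polynomial.Chebyshev

/-- The discriminant of a polynomial. -/
noncomputable def disc (f : Polynomial ℂ) : ℂ :=
  (-1) ^ (f.natDegree * (f.natDegree - 1) / 2) / f.leadingCoeff * Res f (derivative f)


lemma myCard (p : Polynomial ℂ) : p.roots.card = p.natDegree :=
  (Polynomial.splits_iff_card_roots).1 (IsAlgClosed.splits p)

lemma eval_prod_roots (p : Polynomial ℂ) (x : ℂ) :
    p.eval x = p.leadingCoeff * (p.roots.map (fun a => x - a)).prod := by
  conv_lhs => rw [Polynomial.Splits.eq_prod_roots (IsAlgClosed.splits p)]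
  simp [Polynomial.eval_multiset_prod, Multiset.map_map, Function.comp]

lemma prod_eval_eq (p q : Polynomial ℂ) :
    (p.roots.map (fun a => q.eval a)).prod
      = q.leadingCoeff ^ p.natDegree *
        (p.roots.map (fun a => ((q.roots.map (fun b => a - b)).prod))).prod := by
  have : (p.roots.map (fun a => q.eval a))
      = (p.roots.map (fun a => q.leadingCoeff * (q.roots.map (fun b => a - b)).prod)) :=
    Multiset.map_congr rfl (fun a _ => eval_prod_roots q a)
  rw [this, Multiset.prod_map_mul]
  congr 1
  simp [Multiset.map_const', myCard]

lemma res_swap_s14 (p q : Polynomial ℂ) :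
    p.leadingCoeff ^ q.natDegree * (p.roots.map (fun a => q.eval a)).prod =
      (-1) ^ (p.natDegree * q.natDegree) *
        (q.leadingCoeff ^ p.natDegree * (q.roots.map (fun b => p.eval b)).prod) := by
  rw [prod_eval_eq p q, prod_eval_eq q p]
  have key : (p.roots.map (fun a => ((q.roots.map (fun b => a - b)).prod))).prod
      = (-1) ^ (p.natDegree * q.natDegree) *
        (q.roots.map (fun b => ((p.roots.map (fun a => b - a)).prod))).prod := by
    rw [Multiset.prod_map_prod_map p.roots q.roots]
    have : (q.roots.map (fun b => ((p.roots.map (fun a => a - b)).prod)))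
        = (q.roots.map (fun b => (-1) ^ p.natDegree * ((p.roots.map (fun a => b - a)).prod))) := by
      refine Multiset.map_congr rfl (fun b _ => ?_)
      have h2 : (p.roots.map (fun a => a - b))
          = (p.roots.map (fun a => (-1) * (b - a))) :=
        Multiset.map_congr rfl (fun a _ => by ring)
      rw [h2, Multiset.prod_map_mul, Multiset.map_const', Multiset.prod_replicate, myCard]
    rw [this, Multiset.prod_map_mul]
    congr 1
    rw [Multiset.map_const', Multiset.prod_replicate, ← pow_mul, myCard, mul_comm]
  rw [key]; ring


lemma T_cast_add_two (k : ℕ) :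
    T ℂ (k + 2 : ℕ) = 2 * X * T ℂ (k + 1 : ℕ) - T ℂ (k : ℕ) := by
  have : ((k + 2 : ℕ) : ℤ) = (k : ℤ) + 2 := by push_cast; ring
  rw [this]
  have : ((k + 1 : ℕ) : ℤ) = (k : ℤ) + 1 := by push_cast; ring
  rw [this]
  exact T_add_two ℂ k

lemma T_deg_lc (k : ℕ) :
    (T ℂ k).natDegree = k ∧ (T ℂ k).leadingCoeff = 2 ^ (k - 1) := by
  induction k using Nat.strong_induction_on with
  | _ k ih =>
    match k with
    | 0 => constructor <;> simp [T_zero]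
    | 1 => constructor <;> simp [T_one]
    | (k+2) =>
      obtain ⟨hd1, hl1⟩ := ih (k+1) (by omega)
      obtain ⟨hd0, hl0⟩ := ih k (by omega)
      simp only [Nat.add_sub_cancel] at hl1
      have hne1 : T ℂ (k+1 : ℕ) ≠ 0 := fun h => by
        rw [h, leadingCoeff_zero] at hl1
        exact (pow_ne_zero k (two_ne_zero)) hl1.symm
      have h2X : (2 * X : Polynomial ℂ) ≠ 0 := by
        intro h
        have := congr_arg (fun p => Polynomial.coeff p 1) h
        simp at this
      have hd2X : (2 * X : Polynomial ℂ).natDegree = 1 := by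
        compute_degree!
      have hl2X : (2 * X : Polynomial ℂ).leadingCoeff = 2 := by
        have : (2 * X : Polynomial ℂ) = C 2 * X := by rw [map_ofNat]
        rw [this, leadingCoeff_mul, leadingCoeff_C, leadingCoeff_X]; norm_num
      have hdA : (2 * X * T ℂ (k+1 : ℕ)).natDegree = k + 2 := by
        rw [natDegree_mul h2X hne1, hd2X, hd1]; omega
      have hlA : (2 * X * T ℂ (k+1 : ℕ)).leadingCoeff = 2 ^ (k+1) := by
        rw [leadingCoeff_mul, hl2X, hl1]; ring
      have hlt : (T ℂ (k : ℕ)).natDegree < (2 * X * T ℂ (k+1 : ℕ)).natDegree := by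
        rw [hdA, hd0]; omega
      rw [T_cast_add_two k]
      constructor
      · rw [natDegree_sub_eq_left_of_natDegree_lt hlt, hdA]
      · rw [leadingCoeff_sub_of_degree_lt (degree_lt_degree hlt), hlA]
        norm_num

lemma T_ne_zero (k : ℕ) : T ℂ k ≠ 0 := fun h => by
  have := (T_deg_lc k).2
  rw [h, leadingCoeff_zero] at this
  exact (pow_ne_zero _ (two_ne_zero)) this.symm

lemma T_eval_one (k : ℕ) : (T ℂ k).eval 1 = 1 := by
  induction k using Nat.strong_induction_on with
  | _ k ih =>
    match k with
    | 0 => simp [T_zero]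
    | 1 => simp [T_one]
    | (k+2) =>
      rw [T_cast_add_two k]
      simp only [eval_sub, eval_mul, eval_ofNat, eval_X]
      rw [ih (k+1) (by omega), ih k (by omega)]
      norm_num

lemma T_eval_neg_one (k : ℕ) : (T ℂ k).eval (-1) = (-1) ^ k := by
  induction k using Nat.strong_induction_on with
  | _ k ih =>
    match k with
    | 0 => simp [T_zero]
    | 1 => simp [T_one]
    | (k+2) =>
      rw [T_cast_add_two k]
      simp only [eval_sub, eval_mul, eval_ofNat, eval_X]
      rw [ih (k+1) (by omega), ih k (by omega), pow_succ, pow_succ]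
      ring
lemma prodQ (j : ℕ) :
    ((T ℂ (j+1 : ℕ)).roots.map (fun b => (T ℂ (j : ℕ)).eval b)).prod * 2 ^ j
      = (-1) ^ ((j+1) * j / 2) := by
  induction j with
  | zero => simp
  | succ j ih =>
    have hswap := res_swap_s14 (T ℂ (j+2 : ℕ)) (T ℂ (j+1 : ℕ))
    have hd2 := (T_deg_lc (j+2)).1
    have hd1 := (T_deg_lc (j+1)).1
    have hl2 := (T_deg_lc (j+2)).2
    have hl1 := (T_deg_lc (j+1)).2
    simp only [Nat.add_sub_cancel] at hl2 hl1
    rw [hd2, hd1, hl2, hl1] at hswap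
    have hpt : ((T ℂ (j+1 : ℕ)).roots.map (fun b => (T ℂ (j+2 : ℕ)).eval b))
        = ((T ℂ (j+1 : ℕ)).roots.map (fun b => (-1) * (T ℂ (j : ℕ)).eval b)) := by
      refine Multiset.map_congr rfl (fun b hb => ?_)
      have hroot : (T ℂ (j+1 : ℕ)).eval b = 0 :=
        (Polynomial.mem_roots (T_ne_zero (j+1))).1 hb
      rw [T_cast_add_two j]
      simp only [eval_sub, eval_mul, eval_ofNat, eval_X]
      rw [hroot]; ring
    rw [hpt, Multiset.prod_map_mul, Multiset.map_const', Multiset.prod_replicate,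
      myCard, hd1] at hswap
    set Qn := ((T ℂ (j+2 : ℕ)).roots.map (fun b => (T ℂ (j+1 : ℕ)).eval b)).prod with hQn
    set Qo := ((T ℂ (j+1 : ℕ)).roots.map (fun b => (T ℂ (j : ℕ)).eval b)).prod with hQo
    have heven : Even ((j+2) * (j+1)) := by
      have := Nat.even_mul_succ_self (j+1)
      rwa [mul_comm] at this
    have hident : (j+2) * (j+1) / 2 = (j+1) * j / 2 + (j+1) := by
      have hb : Even ((j+1) * j) := by
        have := Nat.even_mul_succ_self j; rwa [mul_comm] at this
      have hab : (j+2) * (j+1) = (j+1) * j + 2 * (j+1) := by ring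
      rw [Nat.even_iff] at hb
      omega
    rw [show j + 2 - 1 = j + 1 from rfl] at hswap
    rw [heven.neg_one_pow, one_mul] at hswap
    set a : ℂ := 2 ^ j with ha
    set A : ℂ := a ^ (j+1) with hA
    have h2a : (2:ℂ) ^ (j+1) = 2 * a := by rw [pow_succ]; ring
    have hP1 : ((2:ℂ) ^ (j+1)) ^ (j+1) = 2 * a * A := by
      rw [h2a, mul_pow, ← h2a, h2a]
    have hP2 : ((2:ℂ) ^ j) ^ (j+2) = A * a := by rw [pow_succ]
    rw [hP1, hP2] at hswap
    have haz : a ≠ 0 := pow_ne_zero _ two_ne_zero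
    have hAz : A ≠ 0 := pow_ne_zero _ haz
    rw [show j + 1 + 1 = j + 2 from rfl, hident]
    rw [pow_add (-1 : ℂ) ((j+1)*j/2) (j+1), h2a]
    refine mul_left_cancel₀ hAz ?_
    linear_combination hswap + A * ((-1:ℂ) ^ (j+1)) * ih

lemma oneCase (c : ℂ) (hc : c ≠ 0) (hc1 : c ^ 2 ≠ 1) :
    disc (T ℂ (1:ℕ) + C c * T ℂ ((1 : ℤ) - 1)) =
      2 ^ ((1 - 1) * (1 - 2)) * (2 * (1 : ℂ) - 1) ^ 1 * (-c) ^ 1 / (1 - c ^ 2) *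
        (T ℂ (1:ℕ) + C c * T ℂ ((1 : ℤ) - 1)).eval
          (-(((1 : ℂ) - 1) * c ^ 2 + 1) / ((2 * (1 : ℂ) - 1) * c)) := by
  have h0 : (1 : ℤ) - 1 = 0 := by norm_num
  rw [h0]
  have hf : T ℂ (1:ℕ) + C c * T ℂ (0:ℤ) = X + C c := by
    rw [Nat.cast_one, T_one, T_zero, mul_one]
  rw [hf]
  have h1c : (1:ℂ) - c^2 ≠ 0 := sub_ne_zero.2 (Ne.symm hc1)
  have hd : (X + C c : Polynomial ℂ).natDegree = 1 := by compute_degree!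
  have hlc : (X + C c : Polynomial ℂ).leadingCoeff = 1 := by
    rw [leadingCoeff, hd]; simp [coeff_X_one]
  have hder : derivative (X + C c : Polynomial ℂ) = 1 := by simp
  simp only [disc, Res, hd, hder, hlc]
  simp only [natDegree_one, pow_zero, eval_one]
  rw [Multiset.prod_map_one]
  simp only [eval_add, eval_X, eval_C]
  field_simp
  ring

lemma mainCase (j : ℕ) (c : ℂ) (hc : c ≠ 0) (hc1 : c ^ 2 ≠ 1) :
    disc (T ℂ (j+2:ℕ) + C c * T ℂ ((j+1:ℕ) : ℤ)) =
      2 ^ ((j+1) * j) * (2 * ((j:ℂ)+2) - 1) ^ (j+2) * (-c) ^ (j+2) / (1 - c ^ 2) *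
        (T ℂ (j+2:ℕ) + C c * T ℂ ((j+1:ℕ) : ℤ)).eval
          (-((((j:ℂ)+2) - 1) * c ^ 2 + ((j:ℂ)+2)) / ((2 * ((j:ℂ)+2) - 1) * c)) := by
  have h1c : (1:ℂ) - c^2 ≠ 0 := sub_ne_zero.2 (Ne.symm hc1)
  set p1 := T ℂ ((j+2:ℕ) : ℤ) with hp1
  set p0 := T ℂ ((j+1:ℕ) : ℤ) with hp0
  set f := p1 + C c * p0 with hfdef
  -- degrees and leading coefficients
  have hd1 : p1.natDegree = j+2 := (T_deg_lc (j+2)).1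
  have hd0 : p0.natDegree = j+1 := (T_deg_lc (j+1)).1
  have hl1 : p1.leadingCoeff = 2^(j+1) := by
    have := (T_deg_lc (j+2)).2; rwa [show j+2-1 = j+1 from rfl] at this
  have hl0 : p0.leadingCoeff = 2^j := by
    have := (T_deg_lc (j+1)).2; rwa [show j+1-1 = j from rfl] at this
  have hp0ne : p0 ≠ 0 := T_ne_zero (j+1)
  have hp1ne : p1 ≠ 0 := T_ne_zero (j+2)
  have hdcp : (C c * p0).natDegree = j+1 := by rw [natDegree_C_mul hc, hd0]
  have hdf : f.natDegree = j+2 := by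
    rw [hfdef, natDegree_add_eq_left_of_natDegree_lt, hd1]
    rw [hdcp, hd1]; omega
  have hlf : f.leadingCoeff = 2^(j+1) := by
    rw [hfdef, leadingCoeff_add_of_degree_lt', hl1]
    apply degree_lt_degree
    rw [hdcp, hd1]; omega
  have hlfne : (2:ℂ)^(j+1) ≠ 0 := pow_ne_zero _ two_ne_zero
  have hfne : f ≠ 0 := fun h => by rw [h, leadingCoeff_zero] at hlf; exact hlfne hlf.symm
  -- derivative
  have hddf : (derivative f).natDegree = j+1 := by
    apply natDegree_eq_of_le_of_coeff_ne_zero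
    · have := natDegree_derivative_le f
      rw [hdf] at this; exact this
    · rw [coeff_derivative, show j+1+1 = j+2 from rfl, ← hdf, coeff_natDegree, hlf]
      apply mul_ne_zero hlfne
      have : ((j+1 : ℕ) : ℂ) + 1 ≠ 0 := by
        rw [show ((j+1:ℕ):ℂ) + 1 = ((j+2:ℕ):ℂ) by push_cast; ring]
        exact Nat.cast_ne_zero.2 (by omega)
      exact_mod_cast this
  -- scalar abbreviations
  set u : ℂ := 2^j with hu
  set B : ℂ := (2 * ((j:ℂ)+2) - 1) * c with hB
  have hBne : B ≠ 0 := by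
    rw [hB]
    apply mul_ne_zero _ hc
    intro h
    have h2 : ((2*j+3 : ℕ) : ℂ) = 0 := by push_cast; linear_combination h
    exact (Nat.cast_ne_zero.2 (by omega : 2*j+3 ≠ 0)) h2
  set A : ℂ := (((j:ℂ)+2) - 1) * c^2 + ((j:ℂ)+2) with hA
  set x₀ : ℂ := -A / B with hx₀
  -- the four products over the roots of f
  set Pd : ℂ := (f.roots.map (fun a => (derivative f).eval a)).prod with hPdd
  set S : ℂ := (f.roots.map (fun a => p0.eval a)).prod with hSd
  set P : ℂ := (f.roots.map (fun a => A + B * a)).prod with hPd2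
  set D : ℂ := (f.roots.map (fun a => 1 - a^2)).prod with hDd
  have E1 : D * Pd = S * P := by
    rw [hDd, hPdd, hSd, hPd2, ← Multiset.prod_map_mul, ← Multiset.prod_map_mul]
    congr 1
    refine Multiset.map_congr rfl (fun a ha => ?_)
    have hroot : f.eval a = 0 := (Polynomial.mem_roots hfne).1 ha
    have hroot' : (T ℂ ((j+2:ℕ):ℤ)).eval a + c * (T ℂ ((j+1:ℕ):ℤ)).eval a = 0 := by
      rw [hfdef, hp1, hp0] at hroot
      simpa using hroot
    have i1 := one_sub_X_sq_mul_derivative_T_eq_poly_in_T (R := ℂ) ((j+1:ℕ) : ℤ)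
    have i2 := one_sub_X_sq_mul_derivative_T_eq_poly_in_T (R := ℂ) ((j:ℕ) : ℤ)
    rw [show ((j+1:ℕ):ℤ) + 1 = ((j+2:ℕ):ℤ) by push_cast; ring] at i1
    rw [show ((j:ℕ):ℤ) + 1 = ((j+1:ℕ):ℤ) by push_cast; ring] at i2
    have e1 := congr_arg (Polynomial.eval a) i1
    have e2 := congr_arg (Polynomial.eval a) i2
    have e3 := congr_arg (Polynomial.eval a) (T_cast_add_two j)
    simp only [eval_mul, eval_sub, eval_add, eval_pow, eval_X, eval_one, eval_intCast,
      eval_ofNat] at e1 e2 e3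
    push_cast at e1 e2 e3 hroot'
    have hder : derivative f = derivative (T ℂ ((j+2:ℕ):ℤ)) + C c * derivative (T ℂ ((j+1:ℕ):ℤ)) := by
      rw [hfdef, hp1, hp0, derivative_add, derivative_C_mul]
    rw [hder, hp0, hA, hB]
    simp only [eval_add, eval_mul, eval_C]
    push_cast
    linear_combination e1 + c * e2 + (((j:ℂ)+1)*c) * e3 +
      (-((j:ℂ)+2)*a - ((j:ℂ)+1)*c) * hroot'
  -- value of D
  have hD1 : f.eval 1 = (1 : ℂ) + c := by
    rw [hfdef, hp1, hp0]
    simp only [eval_add, eval_mul, eval_C]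
    rw [T_eval_one (j+2), T_eval_one (j+1)]; ring
  have hDm1 : f.eval (-1) = (-1)^(j+2) * (1 - c) := by
    rw [hfdef, hp1, hp0]
    simp only [eval_add, eval_mul, eval_C]
    rw [T_eval_neg_one (j+2), T_eval_neg_one (j+1), pow_succ ((-1:ℂ)) (j+1)]
    ring
  have hprod : f.eval 1 * f.eval (-1) = 2^(j+1) * 2^(j+1) * ((-1)^(j+2) * D) := by
    rw [eval_prod_roots f 1, eval_prod_roots f (-1), hlf]
    have hmm : (f.roots.map (fun a => (1 - a) * ((-1) - a)))
        = (f.roots.map (fun a => (-1) * (1 - a^2))) :=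
      Multiset.map_congr rfl (fun a _ => by ring)
    have h3 : (f.roots.map (fun a => 1 - a)).prod * (f.roots.map (fun a => (-1) - a)).prod
        = (-1)^(j+2) * D := by
      rw [← Multiset.prod_map_mul, hmm, Multiset.prod_map_mul, Multiset.map_const',
        Multiset.prod_replicate, myCard, hdf, hDd]
    linear_combination ((2:ℂ)^(j+1) * 2^(j+1)) * h3
  have hDval : (2:ℂ)^(j+1) * 2^(j+1) * D = 1 - c^2 := by
    have hcancel : ((-1:ℂ))^(j+2) ≠ 0 := pow_ne_zero _ (by norm_num)
    apply mul_right_cancel₀ hcancel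
    rw [hD1, hDm1] at hprod
    linear_combination -hprod
  -- value of P
  have hPval : (-B)^(j+2) * f.eval x₀ = 2^(j+1) * P := by
    have h := eval_prod_roots f x₀
    rw [hlf] at h
    have hm : (f.roots.map (fun a => x₀ - a)) = (f.roots.map (fun a => (-B)⁻¹ * (A + B*a))) := by
      refine Multiset.map_congr rfl (fun a _ => ?_)
      rw [hx₀, inv_mul_eq_div, eq_div_iff (neg_ne_zero.2 hBne)]
      field_simp
      ring
    rw [hm, Multiset.prod_map_mul, Multiset.map_const', Multiset.prod_replicate, myCard, hdf,
      ← hPd2] at h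
    rw [h]
    have hone : (-B:ℂ)^(j+2) * ((-B)⁻¹)^(j+2) = 1 := by
      rw [← mul_pow, mul_inv_cancel₀ (neg_ne_zero.2 hBne), one_pow]
    linear_combination ((2:ℂ)^(j+1) * P) * hone
  -- value of S via the swap
  have hswap := res_swap_s14 f p0
  rw [hlf, hdf, hd0, hl0, ← hSd] at hswap
  have hmS : (p0.roots.map (fun b => f.eval b))
      = (p0.roots.map (fun b => (-1) * ((T ℂ ((j:ℕ):ℤ)).eval b))) := by
    refine Multiset.map_congr rfl (fun b hb => ?_)
    have hroot : (T ℂ ((j+1:ℕ):ℤ)).eval b = 0 := by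
      have := (Polynomial.mem_roots hp0ne).1 hb
      rwa [hp0] at this
    have e3 := congr_arg (Polynomial.eval b) (T_cast_add_two j)
    simp only [eval_mul, eval_sub, eval_X, eval_ofNat] at e3
    rw [hfdef, hp1, hp0]
    simp only [eval_add, eval_mul, eval_C]
    rw [hroot] at e3 ⊢
    linear_combination e3
  rw [hmS, Multiset.prod_map_mul, Multiset.map_const', Multiset.prod_replicate, myCard, hd0] at hswap
  have heven : Even ((j+2) * (j+1)) := by
    have := Nat.even_mul_succ_self (j+1)
    rwa [mul_comm] at this
  rw [Even.neg_one_pow heven, one_mul] at hswap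
  have E5 := prodQ j
  rw [← hp0] at E5
  rw [← hu] at E5
  -- normalize powers of two
  have h2u : (2:ℂ)^(j+1) = 2*u := by rw [hu, pow_succ]; ring
  have hune : u ≠ 0 := by rw [hu]; exact pow_ne_zero _ two_ne_zero
  have hUne : u^(j+1) ≠ 0 := pow_ne_zero _ hune
  have hX1 : ((2:ℂ)^(j+1))^(j+1) = (2*u) * u^(j+1) := by
    rw [h2u, mul_pow, h2u]
  have hP2 : ((2:ℂ)^j)^(j+2) = u^(j+1) * u := by
    rw [← hu, pow_succ]
  rw [hX1, hP2] at hswap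
  -- hswap : (2*u) * u^(j+1) * S = u^(j+1)*u * ((-1)^(j+1) * Qo)
  have E4 : (2*u) * S = u * ((-1)^(j+1) *
      ((p0.roots.map (fun b => (T ℂ ((j:ℕ):ℤ)).eval b)).prod)) := by
    apply mul_left_cancel₀ hUne
    linear_combination hswap
  set Qo : ℂ := (p0.roots.map (fun b => (T ℂ ((j:ℕ):ℤ)).eval b)).prod with hQod
  -- key scalar equation
  have key : (1 - c^2) * Pd
      = (-1)^(j+1) * (-1)^((j+1)*j/2) * ((-B)^(j+2) * f.eval x₀) := by
    rw [h2u] at hDval hPval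
    linear_combination ((2*u)^2) * E1 + (-Pd) * hDval + ((2*u)*P) * E4 +
      (-(u * ((-1:ℂ)^(j+1) * Qo))) * hPval + ((-1:ℂ)^(j+1) * ((-B)^(j+2) * f.eval x₀)) * E5
  -- final assembly
  have hident : (j+2)*(j+1)/2 = (j+1)*j/2 + (j+1) := by
    have hb : Even ((j+1) * j) := by
      have := Nat.even_mul_succ_self j; rwa [mul_comm] at this
    have hab : (j+2) * (j+1) = (j+1) * j + 2 * (j+1) := by ring
    rw [Nat.even_iff] at hb
    omega
  have hs2 : ((-1:ℂ))^(j+1) * (-1)^(j+1) = 1 := by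
    rw [← pow_add]
    exact Even.neg_one_pow ⟨j+1, by ring⟩
  have hσ2 : ((-1:ℂ))^((j+1)*j/2) * (-1)^((j+1)*j/2) = 1 := by
    rw [← pow_add]
    exact Even.neg_one_pow ⟨(j+1)*j/2, by ring⟩
  have hBpow : (2 * ((j:ℂ)+2) - 1)^(j+2) * (-c)^(j+2) = (-B)^(j+2) := by
    rw [← mul_pow, hB]; congr 1; ring
  simp only [disc, Res]
  rw [hdf, hddf, hlf, ← hPdd, show (j+2) - 1 = j+1 from rfl, hident,
    pow_add ((-1:ℂ)) ((j+1)*j/2) (j+1), hX1, h2u]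
  have hU : (2:ℂ)^((j+1)*j) = u^(j+1) := by
    rw [hu, ← pow_mul, mul_comm (j+1) j]
  rw [hU]
  have h2une : (2:ℂ)*u ≠ 0 := mul_ne_zero two_ne_zero hune
  rw [div_mul_eq_mul_div, div_mul_eq_mul_div, div_eq_div_iff h2une h1c]
  linear_combination ((-1:ℂ)^((j+1)*j/2) * (-1)^(j+1) * (2*u) * u^(j+1)) * key +
    ((-1:ℂ)^((j+1)*j/2) * (-1)^((j+1)*j/2) * ((2*u)*u^(j+1)*(-B)^(j+2)*(eval x₀ f))) * hs2 +
    ((2*u)*u^(j+1)*(-B)^(j+2)*(eval x₀ f)) * hσ2 +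
    (-((2*u)*u^(j+1)*(eval x₀ f))) * hBpow

theorem stmt_14 (n : ℕ) (hn : 1 ≤ n) (c : ℂ) (hc : c ≠ 0) (hc1 : c ^ 2 ≠ 1) :
    disc (T ℂ n + C c * T ℂ ((n : ℤ) - 1)) =
      2 ^ ((n - 1) * (n - 2)) * (2 * (n : ℂ) - 1) ^ n * (-c) ^ n / (1 - c ^ 2) *
        (T ℂ n + C c * T ℂ ((n : ℤ) - 1)).eval
          (-(((n : ℂ) - 1) * c ^ 2 + n) / ((2 * (n : ℂ) - 1) * c)) := by
  obtain ⟨m, rfl⟩ : ∃ m, n = m + 1 := ⟨n - 1, by omega⟩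
  cases m with
  | zero =>
    rw [show (0:ℕ) + 1 = 1 from rfl]
    have h1 : ((1:ℕ):ℤ) = 1 := by norm_num
    have h2 : ((1:ℕ):ℂ) = 1 := by norm_num
    rw [h1, h2]
    exact oneCase c hc hc1
  | succ j =>
    rw [show j + 1 + 1 = j + 2 from rfl]
    have hZ : ((j+2:ℕ):ℤ) - 1 = ((j+1:ℕ):ℤ) := by push_cast; ring
    have hC : ((j+2:ℕ):ℂ) = (j:ℂ) + 2 := by push_cast; ring
    rw [hZ, hC, show (j+2-1)*(j+2-2) = (j+1)*j from rfl]
    exact mainCase j c hc hc1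
end
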